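/- Let f_ε be a Lebesgue probability density on ℝ with characteristic function φ_ε satisfying Assumption 2: |φ_ε(ω)| ≥ 1 − b_ε|ω|^τ for all |ω| ≤ ω₀, with constants ω₀, b_ε, τ > 0. Let w satisfy 0 < w ≤ min{ω₀, (2b_ε)^{−1/τ}} and 2b_ε w^τ < 1. Then for every c ∈ ℝ, | ∫₀^w (1/(|φ_ε(ω)|² ω)) ∫_{−∞}^∞ sin( ω(c−u) ) f_ε(u) du dω | ≤ 2 + Σ_{k=1}^∞ (2b_ε w^τ)^k/(τk); in particular, if 2b_ε w^τ ≤ 1 − e^{−1} the right-hand side is at most 2 + 1/τ. -/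

import Mathlib

open MeasureTheory intervalIntegral Set Filter Topology

set_option linter.unusedVariables false

/-- The characteristic function of a Lebesgue probability density `f` on `ℝ`. -/
noncomputable def charFunD (f : ℝ → ℝ) (ω : ℝ) : ℂ :=
  ∫ u : ℝ, Complex.exp (Complex.I * ω * u) * (f u : ℂ)



noncomputable def sinc (x : ℝ) : ℝ := Real.sin x / x

lemma sinc_meas : Measurable sinc := Real.measurable_sin.div measurable_id

lemma abs_sinc_le_one (x : ℝ) : |sinc x| ≤ 1 := by
  rcases eq_or_ne x 0 with h | h
  · simp [sinc, h]
  · rw [sinc, abs_div, div_le_one (abs_pos.2 h)]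
    exact Real.abs_sin_le_abs

lemma sinc_intInt (a b : ℝ) : IntervalIntegrable sinc volume a b := by
  apply (_root_.intervalIntegrable_const (c := (1:ℝ))).mono_fun
    sinc_meas.aestronglyMeasurable
  filter_upwards with x
  simpa [Real.norm_eq_abs] using abs_sinc_le_one x

noncomputable def G (T : ℝ) : ℝ := ∫ x in (0:ℝ)..T, sinc x

lemma abs_G_le_abs (T : ℝ) : |G T| ≤ |T| := by
  have := intervalIntegral.norm_integral_le_of_norm_le_const
    (a := 0) (b := T) (C := 1) (f := sinc) (fun x _ => by
      simpa [Real.norm_eq_abs] using abs_sinc_le_one x)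
  simpa [G, Real.norm_eq_abs] using this



lemma G01 : ∫ x in (0:ℝ)..1, sinc x ≤ 1 - 1/18 + 5/384 := by
  have h : ∀ x ∈ Icc (0:ℝ) 1, sinc x ≤ 1 - x^2/6 + 5*x^3/96 := by
    intro x hx
    rcases eq_or_lt_of_le hx.1 with h0 | h0
    · simp [sinc, ← h0]
    · have hb := Real.sin_bound (x := x) (by rw [abs_of_pos h0]; exact hx.2)
      rw [abs_of_pos h0] at hb
      have : Real.sin x ≤ x - x^3/6 + x^4*(5/96) := by
        have := abs_le.1 hb; nlinarith [this.2, mul_nonneg (pow_pos h0 4).le (sub_nonneg.2 hx.2)]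
      rw [sinc, div_le_iff₀ h0]
      nlinarith [hx.2, h0.le]
  have hint : IntervalIntegrable sinc volume 0 1 := sinc_intInt 0 1
  calc ∫ x in (0:ℝ)..1, sinc x ≤ ∫ x in (0:ℝ)..1, (1 - x^2/6 + 5*x^3/96) := by
        apply intervalIntegral.integral_mono_on (by norm_num) hint
        · apply IntervalIntegrable.add
          · apply IntervalIntegrable.sub intervalIntegrable_const
            exact (Continuous.intervalIntegrable (by continuity) _ _)
          · exact (Continuous.intervalIntegrable (by continuity) _ _)
        · exact h
    _ = 1 - 1/18 + 5/384 := by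
        rw [intervalIntegral.integral_add, intervalIntegral.integral_sub]
        · simp [intervalIntegral.integral_div, integral_pow, intervalIntegral.integral_const_mul]
          norm_num
        · exact intervalIntegrable_const
        · exact (Continuous.intervalIntegrable (by continuity) _ _)
        · apply IntervalIntegrable.sub intervalIntegrable_const
          exact (Continuous.intervalIntegrable (by continuity) _ _)
        · exact (Continuous.intervalIntegrable (by continuity) _ _)




lemma G12 : ∫ x in (1:ℝ)..2, sinc x ≤ 0.6931471808 := by
  have h : ∀ x ∈ Icc (1:ℝ) 2, sinc x ≤ x⁻¹ := by
    intro x hx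
    have h0 : (0:ℝ) < x := lt_of_lt_of_le one_pos hx.1
    rw [sinc, div_le_iff₀ h0, inv_mul_cancel₀ h0.ne']
    exact Real.sin_le_one x
  calc ∫ x in (1:ℝ)..2, sinc x ≤ ∫ x in (1:ℝ)..2, x⁻¹ := by
        apply intervalIntegral.integral_mono_on (by norm_num) (sinc_intInt 1 2) _ h
        apply intervalIntegrable_inv _ continuousOn_id
        intro x hx
        rw [uIcc_of_le (by norm_num : (1:ℝ) ≤ 2)] at hx
        simp only [id_eq]
        exact (lt_of_lt_of_le one_pos hx.1).ne'
    _ = Real.log 2 := by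
        rw [integral_inv (by simp [uIcc_of_le, (by norm_num : (1:ℝ) ≤ 2)])]
        norm_num
    _ ≤ 0.6931471808 := Real.log_two_lt_d9.le

lemma cos_two_le : Real.cos 2 ≤ -(3598/9216 : ℝ) := by
  have h1 : Real.cos 2 = 2 * Real.cos 1 ^ 2 - 1 := by
    have := Real.cos_two_mul 1
    norm_num at this; exact this
  have hb := Real.cos_bound (x := 1) (by norm_num)
  have hpos := Real.cos_one_pos
  have h2 : Real.cos 1 ≤ 53/96 := by
    have := (abs_le.1 hb).2; norm_num at this ⊢; linarith
  rw [h1]; nlinarith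

lemma tail_bounds (T : ℝ) (hT : 2 ≤ T) :
    (∫ x in (2:ℝ)..T, sinc x) ≤ Real.cos 2 / 2 + 1/2 ∧
    (-1 : ℝ) ≤ ∫ x in (2:ℝ)..T, sinc x := by
  have h2T : ∀ x ∈ uIcc (2:ℝ) T, x ≠ 0 := by
    intro x hx
    rw [uIcc_of_le hT] at hx
    exact (lt_of_lt_of_le two_pos hx.1).ne'
  have hparts : ∫ x in (2:ℝ)..T, (Real.sin x * x⁻¹ + (-Real.cos x) * (-(x^2)⁻¹))
      = (-Real.cos T) * T⁻¹ - (-Real.cos 2) * 2⁻¹ := by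
    have := intervalIntegral.integral_deriv_mul_eq_sub_of_hasDerivAt
      (a := 2) (b := T) (u := fun x => -Real.cos x) (v := fun x => x⁻¹)
      (u' := fun x => Real.sin x) (v' := fun x => -(x^2)⁻¹)
      (by fun_prop) (ContinuousOn.inv₀ (by fun_prop) h2T)
      (fun x hx => by have h := (Real.hasDerivAt_cos x).neg; rw [neg_neg] at h; exact h)
      (fun x hx => by
        apply hasDerivAt_inv
        have h1 := hx.1
        rw [min_eq_left hT] at h1
        exact (lt_trans two_pos h1).ne')
      (Real.continuous_sin.intervalIntegrable _ _)
      (by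
        apply IntervalIntegrable.neg
        apply intervalIntegrable_inv
        · intro x hx; exact pow_ne_zero 2 (h2T x hx)
        · exact (continuous_pow 2).continuousOn)
    simpa using this
  have hTpos : (0:ℝ) < T := lt_of_lt_of_le two_pos hT
  have hg : IntervalIntegrable (fun x => Real.cos x * (x^2)⁻¹) volume 2 T := by
    apply ContinuousOn.intervalIntegrable
    apply ContinuousOn.mul (by fun_prop)
    exact ContinuousOn.inv₀ (by fun_prop) (fun x hx => pow_ne_zero 2 (h2T x hx))
  have hsin : IntervalIntegrable (fun x => Real.sin x * x⁻¹) volume 2 T := by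
    have : (fun x => Real.sin x * x⁻¹) = sinc := by
      funext x; rw [sinc, div_eq_mul_inv]
    rw [this]; exact sinc_intInt 2 T
  have h1 : ∫ x in (2:ℝ)..T, sinc x
      = (-Real.cos T) * T⁻¹ + Real.cos 2 * 2⁻¹ - ∫ x in (2:ℝ)..T, Real.cos x * (x^2)⁻¹ := by
    have h2 := hparts
    have : (fun x => Real.sin x * x⁻¹ + (-Real.cos x) * (-(x^2)⁻¹))
        = fun x => Real.sin x * x⁻¹ + Real.cos x * (x^2)⁻¹ := by
      funext x; ring
    rw [this, intervalIntegral.integral_add hsin hg] at h2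
    have h3 : ∫ x in (2:ℝ)..T, sinc x = ∫ x in (2:ℝ)..T, Real.sin x * x⁻¹ := by
      apply intervalIntegral.integral_congr; intro x _; rw [sinc, div_eq_mul_inv]
    rw [h3]; linarith
  have hxint : ∫ x in (2:ℝ)..T, (x^2)⁻¹ = 2⁻¹ - T⁻¹ := by
    have := intervalIntegral.integral_eq_sub_of_hasDerivAt (a := 2) (b := T)
      (f := fun x => -x⁻¹) (f' := fun x => (x^2)⁻¹)
      (fun x hx => by have h := (hasDerivAt_inv (h2T x hx)).neg; rw [neg_neg] at h; exact h)
      (by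
        apply ContinuousOn.intervalIntegrable
        exact ContinuousOn.inv₀ (by fun_prop) (fun x hx => pow_ne_zero 2 (h2T x hx)))
    rw [this]; ring
  have hTinv2 : T⁻¹ ≤ 2⁻¹ := inv_anti₀ two_pos hT
  have habs : |∫ x in (2:ℝ)..T, Real.cos x * (x^2)⁻¹| ≤ 2⁻¹ - T⁻¹ := by
    have hgi : IntervalIntegrable (fun x : ℝ => (x^2)⁻¹) volume 2 T := by
      apply ContinuousOn.intervalIntegrable
      exact ContinuousOn.inv₀ (by fun_prop) (fun x hx => pow_ne_zero 2 (h2T x hx))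
    have hb := intervalIntegral.norm_integral_le_abs_of_norm_le (μ := volume) (a := 2) (b := T)
      (f := fun x => Real.cos x * (x^2)⁻¹) (g := fun x : ℝ => (x^2)⁻¹)
      (by
        filter_upwards with x
        rw [Real.norm_eq_abs, abs_mul, abs_inv, abs_pow, sq_abs]
        exact mul_le_of_le_one_left (by positivity) (Real.abs_cos_le_one x)) hgi
    rw [hxint, abs_of_nonneg (show (0:ℝ) ≤ 2⁻¹ - T⁻¹ by linarith)] at hb
    simpa [Real.norm_eq_abs] using hb
  have hcTle := Real.cos_le_one T
  have hcTge := Real.neg_one_le_cos T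
  have habs' := abs_le.1 habs
  have hTinv : (0:ℝ) < T⁻¹ := by positivity
  have hcos2ge : (-1:ℝ) ≤ Real.cos 2 := Real.neg_one_le_cos 2
  constructor
  · rw [h1]; nlinarith
  · rw [h1]; nlinarith











lemma sinc_nonneg_on {x : ℝ} (h0 : 0 ≤ x) (h2 : x ≤ 2) : 0 ≤ sinc x := by
  apply div_nonneg _ h0
  exact Real.sin_nonneg_of_nonneg_of_le_pi h0 (h2.trans Real.two_le_pi)

lemma G_neg (T : ℝ) : G (-T) = -G T := by
  have h1 : (fun x : ℝ => sinc (-x)) = sinc := by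
    funext x; rw [sinc, sinc, Real.sin_neg, neg_div_neg_eq]
  have h2 := intervalIntegral.integral_comp_neg (a := 0) (b := -T) sinc
  rw [h1] at h2
  rw [G, h2, neg_neg, neg_zero, G, ← intervalIntegral.integral_symm]

lemma intseg_nonneg {a b : ℝ} (h0 : 0 ≤ a) (hab : a ≤ b) (h2 : b ≤ 2) :
    0 ≤ ∫ x in a..b, sinc x :=
  intervalIntegral.integral_nonneg hab
    (fun u hu => sinc_nonneg_on (h0.trans hu.1) (hu.2.trans h2))

lemma abs_G_le_two (T : ℝ) : |G T| ≤ 2 := by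
  have key : ∀ S : ℝ, 0 ≤ S → |G S| ≤ 2 := by
    intro S hS
    rcases le_or_gt S 2 with h2 | h2
    · calc |G S| ≤ |S| := abs_G_le_abs S
        _ ≤ 2 := by rw [abs_of_nonneg hS]; exact h2
    · have hsplit : G S = (∫ x in (0:ℝ)..1, sinc x) + (∫ x in (1:ℝ)..2, sinc x)
          + ∫ x in (2:ℝ)..S, sinc x := by
        rw [G, ← intervalIntegral.integral_add_adjacent_intervals (b := 2)
            (sinc_intInt 0 2) (sinc_intInt 2 S),
          ← intervalIntegral.integral_add_adjacent_intervals (b := 1)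
            (sinc_intInt 0 1) (sinc_intInt 1 2)]
      have h01 := G01
      have h12 := G12
      have h01' := intseg_nonneg (le_refl 0) zero_le_one one_le_two
      have h12' := intseg_nonneg zero_le_one one_le_two le_rfl
      have htail := tail_bounds S h2.le
      have hc2 := cos_two_le
      rw [abs_le, hsplit]
      norm_num at h12 ⊢
      constructor <;> nlinarith [htail.1, htail.2]
  rcases le_or_gt 0 T with h | h
  · exact key T h
  · rw [← neg_neg T, G_neg, abs_neg]
    exact key (-T) (by linarith)

lemma G_comp {a : ℝ} (ha : a ≠ 0) (ε w : ℝ) :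
    ∫ ω in ε..w, Real.sin (ω * a) / ω = G (w * a) - G (ε * a) := by
  have h1 : (fun ω : ℝ => Real.sin (ω * a) / ω) = fun ω => a * sinc (ω * a) := by
    funext ω
    rcases eq_or_ne ω 0 with h | h
    · simp [sinc, h]
    · rw [sinc]
      field_simp
  rw [h1, intervalIntegral.integral_const_mul,
    intervalIntegral.integral_comp_mul_right sinc ha, smul_eq_mul, ← mul_assoc,
    mul_inv_cancel₀ ha, one_mul,
    ← intervalIntegral.integral_interval_sub_left (sinc_intInt 0 (w*a)) (sinc_intInt 0 (ε*a))]
  rfl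

lemma hasSum_S {x τ : ℝ} (h1 : |x| < 1) :
    HasSum (fun k : ℕ => x ^ (k+1) / (τ * (k+1))) (-Real.log (1-x) / τ) := by
  have h := (Real.hasSum_pow_div_log_of_abs_lt_one h1).div_const τ
  have e : (fun k : ℕ => x ^ (k+1) / (τ * (k+1))) = fun i : ℕ => x ^ (i + 1) / (i + 1) / τ := by
    funext k; rw [div_div]; ring_nf
  rw [e]; exact h

lemma S_ge {x τ : ℝ} (hτ : 0 < τ) (h0 : 0 ≤ x) (h1 : x < 1) :
    x / (τ * (1 - x/2)) ≤ ∑' k : ℕ, x ^ (k+1) / (τ * (k+1)) := by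
  have hx2 : x/2 < 1 := by linarith
  have hx2' : (0:ℝ) ≤ x/2 := by linarith
  have hgeo := (hasSum_geometric_of_lt_one hx2' hx2).mul_left (x/τ)
  have hfun : (fun k : ℕ => x / τ * (x / 2) ^ k) = fun k : ℕ => x ^ (k+1) / (τ * 2^k) := by
    funext k; rw [div_pow, pow_succ]; field_simp
  have hval : x / τ * (1 - x/2)⁻¹ = x / (τ * (1 - x/2)) := by
    field_simp
  rw [hfun, hval] at hgeo
  have hS := hasSum_S (τ := τ) (x := x) (by rwa [abs_of_nonneg h0])
  rw [hS.tsum_eq]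
  apply hasSum_le _ hgeo hS
  intro k
  apply div_le_div_of_nonneg_left (by positivity) (by positivity)
  have : (k:ℝ) + 1 ≤ 2^k := by exact_mod_cast Nat.lt_two_pow_self (n := k)
  nlinarith

lemma S_le_inv_tau {x τ : ℝ} (hτ : 0 < τ) (h0 : 0 ≤ x) (hx : x ≤ 1 - Real.exp (-1)) :
    ∑' k : ℕ, x ^ (k+1) / (τ * (k+1)) ≤ 1 / τ := by
  have h1 : x < 1 := by
    have := Real.exp_pos (-1); linarith
  have hS := hasSum_S (τ := τ) (x := x) (by rwa [abs_of_nonneg h0])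
  rw [hS.tsum_eq]
  have hlog : -1 ≤ Real.log (1 - x) := by
    rw [Real.le_log_iff_exp_le (by linarith)]
    linarith
  rw [div_le_div_iff₀ hτ hτ]
  nlinarith

lemma S_nonneg {x τ : ℝ} (hτ : 0 < τ) (h0 : 0 ≤ x) :
    0 ≤ ∑' k : ℕ, x ^ (k+1) / (τ * (k+1)) := by
  apply tsum_nonneg
  intro k
  positivity



variable {fε : ℝ → ℝ}

lemma fe_integrable (hfε1 : ∫ u, fε u = 1) : Integrable fε := by
  by_contra h
  rw [integral_undef h] at hfε1
  norm_num at hfε1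

lemma cexp_norm (z : ℝ) : ‖Complex.exp (Complex.I * z)‖ = 1 := by
  rw [Complex.norm_exp]
  simp

lemma phi_cont (hfεm : Measurable fε) (hfε0 : ∀ u, 0 ≤ fε u) (hfεi : Integrable fε) :
    Continuous (charFunD fε) := by
  apply continuous_of_dominated (bound := fε)
  · intro ω
    apply Measurable.aestronglyMeasurable
    exact (Complex.measurable_exp.comp (by fun_prop)).mul (Complex.measurable_ofReal.comp hfεm)
  · intro ω
    filter_upwards with u
    rw [norm_mul]
    have : Complex.I * (ω:ℂ) * (u:ℂ) = Complex.I * ((ω*u : ℝ):ℂ) := by push_cast; ring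
    rw [this, cexp_norm, one_mul, Complex.norm_real, Real.norm_eq_abs, _root_.abs_of_nonneg (hfε0 u)]
  · exact hfεi
  · filter_upwards with u
    fun_prop

lemma innerF_cont (hfεm : Measurable fε) (hfε0 : ∀ u, 0 ≤ fε u) (hfεi : Integrable fε) (c : ℝ) :
    Continuous (fun ω => ∫ u : ℝ, Real.sin (ω * (c - u)) * fε u) := by
  apply continuous_of_dominated (bound := fε)
  · intro ω
    exact (Real.measurable_sin.comp (by fun_prop)).mul hfεm |>.aestronglyMeasurable
  · intro ω
    filter_upwards with u
    rw [Real.norm_eq_abs, abs_mul, _root_.abs_of_nonneg (hfε0 u)]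
    exact mul_le_of_le_one_left (hfε0 u) (abs_le.2 ⟨Real.neg_one_le_sin _, Real.sin_le_one _⟩)
  · exact hfεi
  · filter_upwards with u
    fun_prop

lemma conj_charFunD (hfεi : Integrable fε) (ω : ℝ) :
    (starRingEnd ℂ) (charFunD fε ω) = ∫ u : ℝ, Complex.exp (-(Complex.I * ω * u)) * (fε u : ℂ) := by
  rw [charFunD, ← integral_conj]
  congr 1
  funext u
  rw [map_mul, ← Complex.exp_conj]
  simp [Complex.conj_ofReal]

lemma inner_le_phi (hfεm : Measurable fε) (hfε0 : ∀ u, 0 ≤ fε u) (hfεi : Integrable fε)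
    (c ω : ℝ) :
    |∫ u : ℝ, Real.sin (ω * (c - u)) * fε u| ≤ ‖charFunD fε ω‖ := by
  have hint : Integrable (fun u => Complex.exp (Complex.I * (((ω * (c - u)) : ℝ) : ℂ)) * (fε u : ℂ)) := by
    apply Integrable.mono' hfεi
    · apply Measurable.aestronglyMeasurable
      exact (Complex.measurable_exp.comp (by fun_prop)).mul (Complex.measurable_ofReal.comp hfεm)
    · filter_upwards with u
      rw [norm_mul, cexp_norm, one_mul, Complex.norm_real, Real.norm_eq_abs,
        _root_.abs_of_nonneg (hfε0 u)]
  have him : ∫ u : ℝ, Real.sin (ω * (c - u)) * fε u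
      = (∫ u : ℝ, Complex.exp (Complex.I * (((ω * (c - u)) : ℝ) : ℂ)) * (fε u : ℂ)).im := by
    have h2 := integral_im (𝕜 := ℂ) hint
    simp only [RCLike.im_to_complex] at h2
    rw [← h2]
    congr 1
    funext u
    rw [Complex.mul_im]
    have h1 : Complex.I * (((ω * (c - u)) : ℝ) : ℂ) = ((ω * (c-u) : ℝ) : ℂ) * Complex.I := by ring
    rw [h1, Complex.exp_ofReal_mul_I_im, Complex.exp_ofReal_mul_I_re]
    simp
  have heq : ∫ u : ℝ, Complex.exp (Complex.I * (((ω * (c - u)) : ℝ) : ℂ)) * (fε u : ℂ)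
      = Complex.exp (Complex.I * (((ω * c) : ℝ) : ℂ)) * (starRingEnd ℂ) (charFunD fε ω) := by
    rw [conj_charFunD hfεi]
    rw [← smul_eq_mul, ← MeasureTheory.integral_smul]
    congr 1
    funext u
    rw [smul_eq_mul, ← mul_assoc, ← Complex.exp_add]
    congr 2
    push_cast
    ring
  rw [him, heq]
  calc |(Complex.exp (Complex.I * (((ω * c) : ℝ) : ℂ)) * (starRingEnd ℂ) (charFunD fε ω)).im|
      ≤ ‖Complex.exp (Complex.I * (((ω * c) : ℝ) : ℂ)) * (starRingEnd ℂ) (charFunD fε ω)‖ :=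
        Complex.abs_im_le_norm _
    _ = ‖charFunD fε ω‖ := by
        rw [norm_mul, Complex.norm_conj, cexp_norm, one_mul]

lemma phi_le_one (hfε0 : ∀ u, 0 ≤ fε u) (hfε1 : ∫ u, fε u = 1) (ω : ℝ) :
    ‖charFunD fε ω‖ ≤ 1 := by
  rw [charFunD]
  calc ‖∫ u : ℝ, Complex.exp (Complex.I * ω * u) * (fε u : ℂ)‖
      ≤ ∫ u : ℝ, ‖Complex.exp (Complex.I * ω * u) * (fε u : ℂ)‖ := norm_integral_le_integral_norm _
    _ = ∫ u : ℝ, fε u := by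
        congr 1
        funext u
        rw [norm_mul]
        have : Complex.I * (ω:ℂ) * (u:ℂ) = Complex.I * ((ω*u : ℝ):ℂ) := by push_cast; ring
        rw [this, cexp_norm, one_mul, Complex.norm_real, Real.norm_eq_abs, _root_.abs_of_nonneg (hfε0 u)]
    _ = 1 := hfε1

lemma G_cont : Continuous G :=
  intervalIntegral.continuous_primitive (fun a b => sinc_intInt a b) 0

lemma intA_le_two (fε : ℝ → ℝ) (hfεm : Measurable fε) (hfε0 : ∀ u, 0 ≤ fε u)
    (hfε1 : ∫ u, fε u = 1) (c w : ℝ) (hw0 : 0 < w)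
    (hAint : IntervalIntegrable
      (fun ω => (1/ω) * ∫ u : ℝ, Real.sin (ω * (c - u)) * fε u) volume 0 w) :
    |∫ ω in (0:ℝ)..w, (1/ω) * ∫ u : ℝ, Real.sin (ω * (c - u)) * fε u| ≤ 2 := by
  have hfεi : Integrable fε := fe_integrable hfε1
  set A : ℝ → ℝ := fun ω => (1/ω) * ∫ u : ℝ, Real.sin (ω * (c - u)) * fε u with hA
  have hinrc : Continuous (fun ω => ∫ u : ℝ, Real.sin (ω * (c - u)) * fε u) :=
    innerF_cont hfεm hfε0 hfεi c
  have hAm : Measurable A := (measurable_const.div measurable_id).mul hinrc.measurable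
  set εs : ℕ → ℝ := fun n => w / (n+1) with hεs
  have hεpos : ∀ n, 0 < εs n := fun n => by positivity
  have hεle : ∀ n, εs n ≤ w := fun n => by
    rw [hεs]
    apply div_le_self hw0.le
    simp
  have hεtend : Tendsto εs atTop (𝓝 0) := by
    rw [hεs]
    apply Tendsto.div_atTop (tendsto_const_nhds : Tendsto (fun _ : ℕ => w) atTop (𝓝 w))
    exact tendsto_atTop_add_const_right atTop 1 tendsto_natCast_atTop_atTop
  -- Step 1 : Fubini on [ε, w]
  have step1 : ∀ n, ∫ ω in εs n..w, A ω
      = ∫ u : ℝ, fε u * (G (w * (c - u)) - G (εs n * (c - u))) := by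
    intro n
    set ε := εs n with hε
    have hε0 : 0 < ε := hεpos n
    have hεw : ε ≤ w := hεle n
    set μ := volume.restrict (Ioc ε w) with hμ
    haveI : IsFiniteMeasure μ := by
      constructor
      rw [hμ, Measure.restrict_apply_univ, Real.volume_Ioc]
      exact ENNReal.ofReal_lt_top
    set F : ℝ → ℝ → ℝ := fun ω u => (1/ω) * (Real.sin (ω * (c - u)) * fε u) with hF
    have hFm : Measurable (Function.uncurry F) := by
      apply Measurable.mul
      · exact measurable_const.div measurable_fst
      · exact (Real.measurable_sin.comp (by fun_prop)).mul (hfεm.comp measurable_snd)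
    have hae1 : ∀ᵐ p : ℝ × ℝ ∂(μ.prod volume), p.1 ∈ Ioc ε w := by
      rw [ae_iff]
      have hset : {p : ℝ × ℝ | ¬ p.1 ∈ Ioc ε w} = {ω : ℝ | ¬ ω ∈ Ioc ε w} ×ˢ Set.univ := by
        ext p; simp
      rw [hset, Measure.prod_prod]
      have : μ {ω : ℝ | ¬ ω ∈ Ioc ε w} = 0 := by
        rw [hμ, Measure.restrict_apply₀]
        · convert measure_empty (μ := volume)
          ext ω; simp
        · exact (measurableSet_Ioc.compl.nullMeasurableSet)
      rw [this, zero_mul]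
    have hFint : Integrable (Function.uncurry F) (μ.prod volume) := by
      apply Integrable.mono' ((integrable_const (1/ε)).mul_prod hfεi)
        hFm.aestronglyMeasurable
      filter_upwards [hae1] with p hp
      rw [Function.uncurry, hF]
      simp only
      rw [Real.norm_eq_abs, abs_mul, abs_mul, abs_of_nonneg (hfε0 p.2)]
      have hp1 : 0 < p.1 := lt_trans hε0 hp.1
      have h1 : |1/p.1| ≤ 1/ε := by
        rw [abs_of_pos (by positivity : (0:ℝ) < 1/p.1)]
        exact one_div_le_one_div_of_le hε0 hp.1.le
      have h2 : |Real.sin (p.1 * (c - p.2))| ≤ 1 :=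
        abs_le.2 ⟨Real.neg_one_le_sin _, Real.sin_le_one _⟩
      have h3 : 0 ≤ fε p.2 := hfε0 p.2
      calc |1/p.1| * (|Real.sin (p.1 * (c - p.2))| * fε p.2)
          ≤ (1/ε) * (1 * fε p.2) :=
            mul_le_mul h1 (mul_le_mul_of_nonneg_right h2 h3) (by positivity) (by positivity)
        _ = 1/ε * fε p.2 := by ring
    have hswap := integral_integral_swap hFint
    calc ∫ ω in ε..w, A ω = ∫ ω, (∫ u, F ω u) ∂μ := by
          rw [intervalIntegral.integral_of_le hεw]
          apply setIntegral_congr_fun measurableSet_Ioc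
          intro ω _
          rw [hA, hF]
          simp only
          rw [← MeasureTheory.integral_const_mul]
      _ = ∫ u, (∫ ω, F ω u ∂μ) := hswap
      _ = ∫ u : ℝ, fε u * (G (w * (c - u)) - G (ε * (c - u))) := by
          apply MeasureTheory.integral_congr_ae
          filter_upwards with u
          rw [← intervalIntegral.integral_of_le hεw]
          have hcong : ∫ ω in ε..w, F ω u = ∫ ω in ε..w, fε u * (Real.sin (ω * (c-u)) / ω) := by
            apply intervalIntegral.integral_congr
            intro ω _
            rw [hF]; simp only; ring
          rw [hcong, intervalIntegral.integral_const_mul]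
          rcases eq_or_ne (c - u) 0 with hcu | hcu
          · rw [hcu]
            simp [G, intervalIntegral.integral_same]
          · rw [G_comp hcu]
  -- Step 2 : convergence to the limit integral
  have hGc := G_cont
  have step2 : Tendsto (fun n => ∫ ω in εs n..w, A ω) atTop
      (𝓝 (∫ u : ℝ, fε u * G (w * (c - u)))) := by
    have h := tendsto_integral_of_dominated_convergence (μ := volume)
      (F := fun n (u : ℝ) => fε u * (G (w * (c - u)) - G (εs n * (c - u))))
      (f := fun u : ℝ => fε u * G (w * (c - u)))
      (bound := fun u => 4 * fε u)
      (fun n => (hfεm.mul (((hGc.comp (by fun_prop)).sub (hGc.comp (by fun_prop))).measurable)).aestronglyMeasurable)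
      (hfεi.const_mul 4)
      (fun n => by
        filter_upwards with u
        rw [Real.norm_eq_abs, abs_mul, abs_of_nonneg (hfε0 u)]
        have h1 := abs_le.1 (abs_G_le_two (w * (c - u)))
        have h2 := abs_le.1 (abs_G_le_two (εs n * (c - u)))
        have h3 : |G (w * (c - u)) - G (εs n * (c - u))| ≤ 4 :=
          abs_le.2 ⟨by linarith, by linarith⟩
        nlinarith [hfε0 u, abs_nonneg (G (w * (c - u)) - G (εs n * (c - u)))])
      (by
        filter_upwards with u
        have hG0 : Tendsto (fun n => G (εs n * (c - u))) atTop (𝓝 0) := by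
          have hbnd : ∀ n, ‖G (εs n * (c - u))‖ ≤ εs n * |c - u| := by
            intro n
            rw [Real.norm_eq_abs]
            calc |G (εs n * (c - u))| ≤ |εs n * (c - u)| := abs_G_le_abs _
              _ = εs n * |c - u| := by rw [abs_mul, abs_of_pos (hεpos n)]
          have htnd : Tendsto (fun n => εs n * |c - u|) atTop (𝓝 0) := by
            simpa using hεtend.mul_const |c - u|
          exact squeeze_zero_norm hbnd htnd
        have := Tendsto.sub (tendsto_const_nhds : Tendsto _ atTop (𝓝 (G (w * (c - u))))) hG0
        rw [sub_zero] at this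
        exact this.const_mul (fε u))
    exact h.congr (fun n => (step1 n).symm)
  -- Step 3 : convergence to ∫₀^w A
  have step3 : Tendsto (fun n => ∫ ω in εs n..w, A ω) atTop (𝓝 (∫ ω in (0:ℝ)..w, A ω)) := by
    have hsub : ∀ n, ∫ ω in εs n..w, A ω
        = (∫ ω in (0:ℝ)..w, A ω) - ∫ ω in (0:ℝ)..εs n, A ω := by
      intro n
      have h1 : Set.uIcc 0 (εs n) ⊆ Set.uIcc 0 w := by
        apply Set.uIcc_subset_uIcc
        · exact Set.mem_uIcc.2 (Or.inl ⟨le_rfl, hw0.le⟩)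
        · exact Set.mem_uIcc.2 (Or.inl ⟨(hεpos n).le, hεle n⟩)
      have h2 : Set.uIcc (εs n) w ⊆ Set.uIcc 0 w := by
        apply Set.uIcc_subset_uIcc
        · exact Set.mem_uIcc.2 (Or.inl ⟨(hεpos n).le, hεle n⟩)
        · exact Set.mem_uIcc.2 (Or.inl ⟨hw0.le, le_rfl⟩)
      have := intervalIntegral.integral_add_adjacent_intervals
        (hAint.mono_set h1) (hAint.mono_set h2)
      linarith
    have hzero : Tendsto (fun n => ∫ ω in (0:ℝ)..εs n, A ω) atTop (𝓝 0) := by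
      have hAI : IntegrableOn A (Ioc 0 w) volume :=
        (intervalIntegrable_iff_integrableOn_Ioc_of_le hw0.le).1 hAint
      have hind : ∀ n, ∫ ω in Ioc (0:ℝ) w, (Ioc (0:ℝ) (εs n)).indicator A ω
          = ∫ ω in (0:ℝ)..εs n, A ω := by
        intro n
        have hss : Ioc (0:ℝ) w ∩ Ioc 0 (εs n) = Ioc 0 (εs n) := by
          rw [Set.inter_eq_right]
          exact Set.Ioc_subset_Ioc le_rfl (hεle n)
        rw [setIntegral_indicator measurableSet_Ioc, intervalIntegral.integral_of_le (hεpos n).le,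
          hss]
      have h := tendsto_integral_of_dominated_convergence (μ := volume.restrict (Ioc 0 w))
        (F := fun n => (Ioc (0:ℝ) (εs n)).indicator A)
        (f := fun _ => (0:ℝ))
        (bound := fun ω => ‖A ω‖)
        (fun n => (hAm.indicator measurableSet_Ioc).aestronglyMeasurable)
        hAI.norm
        (fun n => by
          filter_upwards with ω
          exact norm_indicator_le_norm_self A ω)
        (by
          filter_upwards [ae_restrict_mem measurableSet_Ioc] with ω hω
          have hev : ∀ᶠ n in atTop, εs n < ω := hεtend.eventually_lt_const hω.1
          apply Tendsto.congr' _ tendsto_const_nhds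
          filter_upwards [hev] with n hn
          rw [Set.indicator_of_notMem]
          intro hmem
          exact absurd hmem.2 (not_le.2 hn))
      rw [MeasureTheory.integral_zero] at h
      exact h.congr (fun n => hind n)
    have := Tendsto.sub (tendsto_const_nhds : Tendsto _ atTop (𝓝 (∫ ω in (0:ℝ)..w, A ω))) hzero
    rw [sub_zero] at this
    exact this.congr (fun n => (hsub n).symm)
  have heq : ∫ ω in (0:ℝ)..w, A ω = ∫ u : ℝ, fε u * G (w * (c - u)) :=
    tendsto_nhds_unique step3 step2
  rw [heq]
  have hb := MeasureTheory.norm_integral_le_of_norm_le (hfεi.const_mul 2)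
    (by
      filter_upwards with u
      rw [Real.norm_eq_abs, abs_mul, abs_of_nonneg (hfε0 u)]
      have := abs_G_le_two (w * (c - u))
      nlinarith [hfε0 u, abs_nonneg (G (w * (c - u)))] :
      ∀ᵐ u : ℝ, ‖fε u * G (w * (c - u))‖ ≤ 2 * fε u)
  rw [Real.norm_eq_abs] at hb
  calc |∫ u : ℝ, fε u * G (w * (c - u))| ≤ ∫ u : ℝ, 2 * fε u := hb
    _ = 2 := by rw [MeasureTheory.integral_const_mul, hfε1, mul_one]

/-- bound on the low-frequency integral `I₁`.  Under Assumption 2 on `φ_ε`,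
for `0 < w ≤ min{ω₀, (2b_ε)^{−1/τ}}` with `2b_ε w^τ < 1` and every `c ∈ ℝ`,
`|∫₀^w (|φ_ε(ω)|² ω)^{−1} ∫ sin(ω(c−u)) f_ε(u) du dω| ≤ 2 + Σ_{k≥1} (2b_ε w^τ)^k/(τk)`;
moreover if `2b_ε w^τ ≤ 1 − e^{−1}`, this right-hand side is at most `2 + 1/τ`. -/

theorem low_frequency_bound (fε : ℝ → ℝ)
    (hfεm : Measurable fε) (hfε0 : ∀ u, 0 ≤ fε u) (hfε1 : ∫ u, fε u = 1)
    (ω₀ bε τ : ℝ) (hω₀ : 0 < ω₀) (hbε : 0 < bε) (hτ : 0 < τ)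
    (hA2 : ∀ ω : ℝ, |ω| ≤ ω₀ → 1 - bε * |ω| ^ τ ≤ ‖charFunD fε ω‖)
    (w : ℝ) (hw0 : 0 < w) (hw : w ≤ min ω₀ ((2 * bε) ^ (-1/τ)))
    (hw1 : 2 * bε * w ^ τ < 1) :
    (∀ c : ℝ,
      |∫ ω in (0:ℝ)..w, (1 / (‖charFunD fε ω‖ ^ 2 * ω)) *
          ∫ u : ℝ, Real.sin (ω * (c - u)) * fε u| ≤
        2 + ∑' k : ℕ, (2 * bε * w ^ τ) ^ (k + 1) / (τ * (k + 1))) ∧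
    (2 * bε * w ^ τ ≤ 1 - Real.exp (-1) →
      2 + (∑' k : ℕ, (2 * bε * w ^ τ) ^ (k + 1) / (τ * (k + 1))) ≤ 2 + 1 / τ) := by
  have hfεi : Integrable fε := fe_integrable hfε1
  have hwτ : 0 < w ^ τ := Real.rpow_pos_of_pos hw0 τ
  set x : ℝ := 2 * bε * w ^ τ with hxdef
  have hx0 : 0 < x := by positivity
  have hx1 : x < 1 := hw1
  have hhalf : (0:ℝ) < 1 - x/2 := by linarith
  have hwω₀ : w ≤ ω₀ := hw.trans (min_le_left _ _)
  have hS0 : 0 ≤ ∑' k : ℕ, x ^ (k+1) / (τ * (k+1)) := S_nonneg hτ hx0.le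
  constructor
  · intro c
    set inr : ℝ → ℝ := fun ω => ∫ u : ℝ, Real.sin (ω * (c - u)) * fε u with hinr
    set h : ℝ → ℝ := fun ω => (1 / (‖charFunD fε ω‖ ^ 2 * ω)) * inr ω with hh
    show |∫ ω in (0:ℝ)..w, h ω| ≤ _
    by_cases hint : IntervalIntegrable h volume 0 w
    swap
    · rw [intervalIntegral.integral_undef hint]
      simp only [abs_zero]
      linarith
    -- main case
    set Φ : ℝ → ℝ := fun ω => ‖charFunD fε ω‖ with hΦ
    have hΦc : Continuous Φ := continuous_norm.comp (phi_cont hfεm hfε0 hfεi)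
    have hinrc : Continuous inr := innerF_cont hfεm hfε0 hfεi c
    set A : ℝ → ℝ := fun ω => (1/ω) * inr ω with hA
    set B : ℝ → ℝ := fun ω => h ω - A ω with hB
    have hhm : Measurable h :=
      (measurable_const.div ((hΦc.measurable.pow_const 2).mul measurable_id)).mul
        hinrc.measurable
    have hAm : Measurable A := (measurable_const.div measurable_id).mul hinrc.measurable
    have hBm : Measurable B := hhm.sub hAm
    set C : ℝ := 2 * bε / (1 - x/2) with hC
    have hC0 : 0 ≤ C := by positivity
    -- pointwise bound for B on Ioc 0 w
    have hBb : ∀ ω ∈ Set.Ioc (0:ℝ) w, |B ω| ≤ C * ω ^ (τ - 1) := by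
      intro ω hω
      have hω0 : 0 < ω := hω.1
      have hωw : ω ≤ w := hω.2
      have hrle : bε * ω ^ τ ≤ x/2 := by
        have : ω ^ τ ≤ w ^ τ := Real.rpow_le_rpow hω0.le hωw hτ.le
        rw [hxdef]
        nlinarith
      have hA2' := hA2 ω (by rw [abs_of_pos hω0]; linarith)
      rw [abs_of_pos hω0] at hA2'
      have hΦlb : 1 - bε * ω ^ τ ≤ Φ ω := hA2'
      have hΦlb2 : 1 - x/2 ≤ Φ ω := by linarith
      have hΦpos : 0 < Φ ω := lt_of_lt_of_le hhalf hΦlb2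
      have hΦub : Φ ω ≤ 1 := phi_le_one hfε0 hfε1 ω
      have hIle : |inr ω| ≤ Φ ω := inner_le_phi hfεm hfε0 hfεi c ω
      have hrw : B ω = inr ω * ((1 - Φ ω ^ 2) / (Φ ω ^ 2 * ω)) := by
        rw [hB, hh, hA]
        simp only
        rw [hΦ]
        simp only
        field_simp [show ‖charFunD fε ω‖ ≠ 0 from ne_of_gt hΦpos]
      rw [hrw, abs_mul]
      have hfac : 0 ≤ (1 - Φ ω ^ 2) / (Φ ω ^ 2 * ω) := by
        apply div_nonneg _ (by positivity)
        nlinarith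
      rw [abs_of_nonneg hfac]
      calc |inr ω| * ((1 - Φ ω ^ 2) / (Φ ω ^ 2 * ω))
          ≤ Φ ω * ((1 - Φ ω ^ 2) / (Φ ω ^ 2 * ω)) :=
            mul_le_mul_of_nonneg_right hIle hfac
        _ = (1 - Φ ω ^ 2) / (Φ ω * ω) := by field_simp
        _ ≤ (2 * bε * ω ^ τ) / ((1 - x/2) * ω) := by
            apply div_le_div₀ (by positivity) _ (by positivity) _
            · nlinarith
            · exact mul_le_mul_of_nonneg_right hΦlb2 hω0.le
        _ = C * ω ^ (τ - 1) := by
            rw [hC, Real.rpow_sub hω0, Real.rpow_one]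
            field_simp
    have hMint : IntervalIntegrable (fun ω => C * ω ^ (τ - 1)) volume 0 w :=
      (intervalIntegral.intervalIntegrable_rpow' (by linarith)).const_mul C
    have hBint : IntervalIntegrable B volume 0 w := by
      rw [intervalIntegrable_iff_integrableOn_Ioc_of_le hw0.le]
      apply Integrable.mono'
        ((intervalIntegrable_iff_integrableOn_Ioc_of_le hw0.le).1 hMint)
        hBm.aestronglyMeasurable
      filter_upwards [ae_restrict_mem measurableSet_Ioc] with ω hω
      rw [Real.norm_eq_abs]
      exact hBb ω hω
    have hAint : IntervalIntegrable A volume 0 w := by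
      have : A = fun ω => h ω - B ω := by
        funext ω; rw [hB]; ring
      rw [this]
      exact hint.sub hBint
    have hsplit : ∫ ω in (0:ℝ)..w, h ω = (∫ ω in (0:ℝ)..w, A ω) + ∫ ω in (0:ℝ)..w, B ω := by
      rw [← intervalIntegral.integral_add hAint hBint]
      apply intervalIntegral.integral_congr
      intro ω _
      rw [hB]; ring
    -- bound on ∫ B
    have hMval : ∫ ω in (0:ℝ)..w, C * ω ^ (τ - 1) = x / (τ * (1 - x/2)) := by
      rw [intervalIntegral.integral_const_mul, integral_rpow (Or.inl (by linarith))]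
      have ht : τ - 1 + 1 = τ := by ring
      rw [ht, Real.zero_rpow hτ.ne', hC, sub_zero, div_mul_div_comm, mul_comm (1 - x/2) τ,
        hxdef]
    have hBle : |∫ ω in (0:ℝ)..w, B ω| ≤ x / (τ * (1 - x/2)) := by
      have hb := intervalIntegral.norm_integral_le_abs_of_norm_le (μ := volume)
        (f := B) (g := fun ω => C * ω ^ (τ - 1))
        (by
          filter_upwards [ae_restrict_mem measurableSet_uIoc] with ω hω
          rw [Set.uIoc_of_le hw0.le] at hω
          rw [Real.norm_eq_abs]
          exact hBb ω hω) hMint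
      rw [hMval, abs_of_nonneg (by positivity)] at hb
      rw [← Real.norm_eq_abs]
      exact hb
    -- bound on ∫ A
    have hAle : |∫ ω in (0:ℝ)..w, A ω| ≤ 2 := by
      have hAint' : IntervalIntegrable
          (fun ω => (1/ω) * ∫ u : ℝ, Real.sin (ω * (c - u)) * fε u) volume 0 w := hAint
      exact intA_le_two fε hfεm hfε0 hfε1 c w hw0 hAint'
    rw [hsplit]
    have hSge := S_ge hτ hx0.le hx1
    calc |(∫ ω in (0:ℝ)..w, A ω) + ∫ ω in (0:ℝ)..w, B ω|
        ≤ |∫ ω in (0:ℝ)..w, A ω| + |∫ ω in (0:ℝ)..w, B ω| := abs_add_le _ _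
      _ ≤ 2 + x / (τ * (1 - x/2)) := add_le_add hAle hBle
      _ ≤ 2 + ∑' k : ℕ, x ^ (k+1) / (τ * (k+1)) := by linarith
  · intro hx2
    have := S_le_inv_tau hτ hx0.le hx2
    linarith
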